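/- Let M = (E, I) be a matroid, {X_e} independent {0,1}-valued random variables with probability vector p lying in the matroid polytope P(M), and S = {e : X_e = 1}. Then E[rank(S)] ≥ (1 - 1/e) · E[|S|]. -/

import Mathlib

open scoped Classical

/-- A matroid on a finite ground set, given by its independent sets. -/
structure FinMatroid (α : Type*) [DecidableEq α] [Fintype α] where
  Indep : Finset α → Prop
  empty_indep : Indep ∅
  subset_indep : ∀ ⦃I J : Finset α⦄, Indep J → I ⊆ J → Indep I
  exchange : ∀ ⦃I J : Finset α⦄, Indep I → Indep J → I.card < J.card →
    ∃ e ∈ J \ I, Indep (insert e I)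

/-- The rank of a set: the size of a largest independent subset. -/
noncomputable def FinMatroid.rank {α : Type*} [DecidableEq α] [Fintype α]
    (M : FinMatroid α) (S : Finset α) : ℕ :=
  (S.powerset.filter (fun I => M.Indep I)).sup Finset.card

/-- Probability that the random set of active elements (each element `e` active
independently with probability `p e`) equals `A`. -/
noncomputable def subsetWeight {α : Type*} [DecidableEq α] [Fintype α]
    (p : α → ℝ) (A : Finset α) : ℝ :=
  (∏ e ∈ A, p e) * ∏ e ∈ Finset.univ \ A, (1 - p e)

/-- `E[rank(S)]` for the random set `S` of active elements. -/
noncomputable def expRank {α : Type*} [DecidableEq α] [Fintype α]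
    (M : FinMatroid α) (p : α → ℝ) : ℝ :=
  ∑ A : Finset α, subsetWeight p A * (M.rank A : ℝ)

section Aux

variable {α : Type*} [DecidableEq α] [Fintype α]

lemma CG.rank_spec (M : FinMatroid α) (S : Finset α) :
    ∃ I, I ⊆ S ∧ M.Indep I ∧ I.card = M.rank S := by
  have hne : (S.powerset.filter (fun I => M.Indep I)).Nonempty :=
    ⟨∅, by simp [M.empty_indep]⟩
  obtain ⟨I, hI, hsup⟩ := Finset.exists_mem_eq_sup _ hne Finset.card
  simp only [Finset.mem_filter, Finset.mem_powerset] at hI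
  exact ⟨I, hI.1, hI.2, hsup.symm⟩

lemma CG.card_le_rank (M : FinMatroid α) {I S : Finset α} (hI : M.Indep I) (h : I ⊆ S) :
    I.card ≤ M.rank S :=
  Finset.le_sup (by simp [Finset.mem_filter, Finset.mem_powerset, h, hI])

lemma CG.rank_le_card (M : FinMatroid α) (S : Finset α) : M.rank S ≤ S.card :=
  Finset.sup_le fun I hI =>
    Finset.card_le_card (Finset.mem_powerset.1 (Finset.mem_filter.1 hI).1)

lemma CG.rank_mono (M : FinMatroid α) {S T : Finset α} (h : S ⊆ T) : M.rank S ≤ M.rank T := by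
  obtain ⟨I, hIS, hind, hcard⟩ := CG.rank_spec M S
  rw [← hcard]; exact CG.card_le_rank M hind (hIS.trans h)

lemma CG.rank_empty (M : FinMatroid α) : M.rank ∅ = 0 :=
  Nat.le_zero.1 ((CG.rank_le_card M ∅).trans (by simp))

/-- The closure lemma: if no element of `C` increases the rank of `A`, then `A ∪ C`
has the same rank as `A`. -/
lemma CG.rank_union_eq (M : FinMatroid α) (A C : Finset α)
    (h : ∀ e ∈ C, M.rank (insert e A) = M.rank A) : M.rank (A ∪ C) = M.rank A := by
  refine le_antisymm ?_ (CG.rank_mono M Finset.subset_union_left)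
  by_contra hlt
  push_neg at hlt
  obtain ⟨I, hIA, hIind, hIcard⟩ := CG.rank_spec M A
  obtain ⟨J, hJ, hJind, hJcard⟩ := CG.rank_spec M (A ∪ C)
  have hc : I.card < J.card := by omega
  obtain ⟨e, he, hind⟩ := M.exchange hIind hJind hc
  have heAC : e ∈ A ∪ C := hJ (Finset.mem_sdiff.1 he).1
  have hle : I.card + 1 ≤ M.rank (insert e A) := by
    have h2 : (insert e I).card ≤ M.rank (insert e A) := by
      refine CG.card_le_rank M hind ?_
      intro x hx
      rcases Finset.mem_insert.1 hx with rfl | hx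
      · exact Finset.mem_insert_self _ _
      · exact Finset.mem_insert_of_mem (hIA hx)
    rwa [Finset.card_insert_of_notMem (Finset.mem_sdiff.1 he).2] at h2
  rcases Finset.mem_union.1 heAC with hA | hC
  · rw [Finset.insert_eq_self.2 hA] at hle; omega
  · rw [h e hC] at hle; omega

/-- The pointwise key inequality coming from the polytope constraints. -/
lemma CG.pointwise (M : FinMatroid α) (p : α → ℝ) (hp0 : ∀ e, 0 ≤ p e)
    (hpoly : ∀ U : Finset α, ∑ e ∈ U, p e ≤ (M.rank U : ℝ)) (A : Finset α) :
    (∑ e : α, p e) - (M.rank A : ℝ) ≤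
      ∑ e : α, p e * ((M.rank (insert e A) : ℝ) - (M.rank (A.erase e) : ℝ)) := by
  set T := Finset.univ.filter (fun e => M.rank A < M.rank (insert e A)) with hT
  have hTc : ∑ e ∈ Finset.univ \ T, p e ≤ (M.rank A : ℝ) := by
    refine (hpoly _).trans ?_
    have key : M.rank (A ∪ (Finset.univ \ T)) = M.rank A := by
      refine CG.rank_union_eq M A _ ?_
      intro e he
      have h1 : ¬ M.rank A < M.rank (insert e A) := by
        have := (Finset.mem_sdiff.1 he).2
        simpa [hT] using this
      exact le_antisymm (not_lt.1 h1) (CG.rank_mono M (Finset.subset_insert e A))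
    have h2 : M.rank (Finset.univ \ T) ≤ M.rank A := by
      calc M.rank (Finset.univ \ T) ≤ M.rank (A ∪ (Finset.univ \ T)) :=
            CG.rank_mono M Finset.subset_union_right
        _ = M.rank A := key
    exact_mod_cast h2
  have hsplit : ∑ e ∈ Finset.univ \ T, p e + ∑ e ∈ T, p e = ∑ e : α, p e :=
    Finset.sum_sdiff (Finset.filter_subset _ _)
  have hd0 : ∀ e : α, (0 : ℝ) ≤ (M.rank (insert e A) : ℝ) - (M.rank (A.erase e) : ℝ) := by
    intro e
    have : M.rank (A.erase e) ≤ M.rank (insert e A) :=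
      CG.rank_mono M ((Finset.erase_subset _ _).trans (Finset.subset_insert _ _))
    have := (Nat.cast_le (α := ℝ)).2 this
    linarith
  have h1 : ∑ e ∈ T, p e ≤ ∑ e ∈ T, p e * ((M.rank (insert e A) : ℝ) - (M.rank (A.erase e) : ℝ)) := by
    refine Finset.sum_le_sum ?_
    intro e he
    have heT : M.rank A < M.rank (insert e A) := by
      have := (Finset.mem_filter.1 (hT ▸ he)).2
      exact this
    have hre : M.rank (A.erase e) ≤ M.rank A := CG.rank_mono M (Finset.erase_subset _ _)
    have hd1 : (1 : ℝ) ≤ (M.rank (insert e A) : ℝ) - (M.rank (A.erase e) : ℝ) := by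
      have : M.rank (A.erase e) + 1 ≤ M.rank (insert e A) := by omega
      have := (Nat.cast_le (α := ℝ)).2 this
      push_cast at this
      linarith
    nlinarith [hp0 e]
  have h2 : ∑ e ∈ T, p e * ((M.rank (insert e A) : ℝ) - (M.rank (A.erase e) : ℝ)) ≤
      ∑ e : α, p e * ((M.rank (insert e A) : ℝ) - (M.rank (A.erase e) : ℝ)) := by
    refine Finset.sum_le_sum_of_subset_of_nonneg (Finset.subset_univ T) ?_
    intro e _ _
    exact mul_nonneg (hp0 e) (hd0 e)
  linarith

lemma CG.subsetWeight_eq (q : α → ℝ) (A : Finset α) :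
    subsetWeight q A = ∏ e : α, (if e ∈ A then q e else 1 - q e) := by
  rw [subsetWeight, Finset.prod_ite]
  congr 1
  · congr 1
    ext x; simp
  · congr 1
    ext x; simp [Finset.mem_sdiff]

lemma CG.sum_subsetWeight (q : α → ℝ) : ∑ A : Finset α, subsetWeight q A = 1 := by
  unfold subsetWeight
  rw [← Finset.powerset_univ]
  rw [← Finset.prod_add]
  simp

lemma CG.subsetWeight_nonneg (q : α → ℝ) (h0 : ∀ e, 0 ≤ q e) (h1 : ∀ e, q e ≤ 1)
    (A : Finset α) : 0 ≤ subsetWeight q A := by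
  refine mul_nonneg (Finset.prod_nonneg fun e _ => h0 e) (Finset.prod_nonneg fun e _ => ?_)
  linarith [h1 e]

/-- Split a sum over all finsets according to membership of `e`. -/
lemma CG.sum_split (e : α) (f : Finset α → ℝ) :
    ∑ A : Finset α, f A =
      ∑ B ∈ Finset.univ.filter (fun B : Finset α => e ∉ B), (f B + f (insert e B)) := by
  rw [Finset.sum_add_distrib]
  rw [← Finset.sum_filter_add_sum_filter_not Finset.univ (fun B : Finset α => e ∉ B) f]
  congr 1
  refine Finset.sum_nbij' (fun A => A.erase e) (fun B => insert e B) ?_ ?_ ?_ ?_ ?_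
  · intro A hA
    simp
  · intro B hB
    simp only [Finset.mem_filter, Finset.mem_univ, true_and, not_not] at *
    simp
  · intro A hA
    simp only [Finset.mem_filter, Finset.mem_univ, true_and, not_not] at hA
    exact Finset.insert_erase hA
  · intro B hB
    simp only [Finset.mem_filter, Finset.mem_univ, true_and] at hB
    exact Finset.erase_insert hB
  · intro A hA
    simp only [Finset.mem_filter, Finset.mem_univ, true_and, not_not] at hA
    rw [Finset.insert_erase hA]

end Aux

section Deriv

variable {α : Type*} [DecidableEq α] [Fintype α]

/-- The factor of the weight corresponding to element `e`, at time `t`. -/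
noncomputable def CG.g (p : α → ℝ) (t : ℝ) (A : Finset α) (e : α) : ℝ :=
  if e ∈ A then t * p e else 1 - t * p e

/-- `F t = E[rank(S_t)]` where elements are active with probabilities `t * p`. -/
noncomputable def CG.F (M : FinMatroid α) (p : α → ℝ) (t : ℝ) : ℝ :=
  ∑ A : Finset α, subsetWeight (fun e => t * p e) A * (M.rank A : ℝ)

/-- The derivative of `F`. -/
noncomputable def CG.D (M : FinMatroid α) (p : α → ℝ) (t : ℝ) : ℝ :=
  ∑ A : Finset α,
    (∑ e : α, (∏ j ∈ Finset.univ.erase e, CG.g p t A j) * (if e ∈ A then p e else - p e)) *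
      (M.rank A : ℝ)

lemma CG.subsetWeight_eq_prod_g (p : α → ℝ) (t : ℝ) (A : Finset α) :
    subsetWeight (fun e => t * p e) A = ∏ e : α, CG.g p t A e := by
  rw [CG.subsetWeight_eq]; rfl

lemma CG.hasDerivAt_F (M : FinMatroid α) (p : α → ℝ) (t : ℝ) :
    HasDerivAt (CG.F M p) (CG.D M p t) t := by
  unfold CG.F CG.D
  refine HasDerivAt.fun_sum ?_
  intro A _
  have h2 : ∀ e ∈ (Finset.univ : Finset α),
      HasDerivAt (fun t => CG.g p t A e) (if e ∈ A then p e else - p e) t := by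
    intro e _
    by_cases he : e ∈ A
    · simp only [CG.g, he, if_true]
      exact hasDerivAt_mul_const (p e)
    · simp only [CG.g, he, if_false]
      simpa using ((hasDerivAt_mul_const (p e)).const_sub 1)
  have hw : HasDerivAt (fun t => ∏ e : α, CG.g p t A e)
      (∑ e : α, (∏ j ∈ Finset.univ.erase e, CG.g p t A j) * (if e ∈ A then p e else - p e))
      t := by
    simpa [smul_eq_mul] using HasDerivAt.fun_finset_prod (𝕜 := ℝ) (𝔸' := ℝ) h2
  simp only [CG.subsetWeight_eq_prod_g]
  exact hw.mul_const _

lemma CG.prod_g_insert (p : α → ℝ) (t : ℝ) (e : α) (B : Finset α) :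
    ∏ j ∈ Finset.univ.erase e, CG.g p t (insert e B) j
      = ∏ j ∈ Finset.univ.erase e, CG.g p t B j := by
  refine Finset.prod_congr rfl ?_
  intro j hj
  have hje : j ≠ e := (Finset.mem_erase.1 hj).1
  simp [CG.g, Finset.mem_insert, hje]

lemma CG.D_eq (M : FinMatroid α) (p : α → ℝ) (t : ℝ) :
    CG.D M p t = ∑ A : Finset α, subsetWeight (fun e => t * p e) A *
      ∑ e : α, p e * ((M.rank (insert e A) : ℝ) - (M.rank (A.erase e) : ℝ)) := by
  have hL : ∀ e : α,
      (∑ A : Finset α,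
        (∏ j ∈ Finset.univ.erase e, CG.g p t A j) * (if e ∈ A then p e else - p e) *
          (M.rank A : ℝ))
      = ∑ B ∈ Finset.univ.filter (fun B : Finset α => e ∉ B),
          p e * ((∏ j ∈ Finset.univ.erase e, CG.g p t B j) *
            ((M.rank (insert e B) : ℝ) - (M.rank B : ℝ))) := by
    intro e
    rw [CG.sum_split e (fun A =>
      (∏ j ∈ Finset.univ.erase e, CG.g p t A j) * (if e ∈ A then p e else - p e) *
        (M.rank A : ℝ))]
    refine Finset.sum_congr rfl ?_
    intro B hB
    have heB : e ∉ B := by simpa using (Finset.mem_filter.1 hB).2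
    rw [if_neg heB, if_pos (Finset.mem_insert_self e B), CG.prod_g_insert]
    ring
  have hR : ∀ e : α,
      (∑ A : Finset α, subsetWeight (fun e' => t * p e') A *
        (p e * ((M.rank (insert e A) : ℝ) - (M.rank (A.erase e) : ℝ))))
      = ∑ B ∈ Finset.univ.filter (fun B : Finset α => e ∉ B),
          p e * ((∏ j ∈ Finset.univ.erase e, CG.g p t B j) *
            ((M.rank (insert e B) : ℝ) - (M.rank B : ℝ))) := by
    intro e
    rw [CG.sum_split e (fun A => subsetWeight (fun e' => t * p e') A *
      (p e * ((M.rank (insert e A) : ℝ) - (M.rank (A.erase e) : ℝ))))]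
    refine Finset.sum_congr rfl ?_
    intro B hB
    have heB : e ∉ B := by simpa using (Finset.mem_filter.1 hB).2
    rw [CG.subsetWeight_eq_prod_g, CG.subsetWeight_eq_prod_g]
    rw [← Finset.mul_prod_erase Finset.univ _ (Finset.mem_univ e),
        ← Finset.mul_prod_erase Finset.univ _ (Finset.mem_univ e)]
    rw [CG.prod_g_insert]
    have hg1 : CG.g p t B e = 1 - t * p e := if_neg heB
    have hg2 : CG.g p t (insert e B) e = t * p e := if_pos (Finset.mem_insert_self e B)
    rw [hg1, hg2, Finset.erase_eq_of_notMem heB, Finset.erase_insert heB,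
        Finset.insert_idem]
    ring
  calc CG.D M p t
      = ∑ A : Finset α, ∑ e : α,
          (∏ j ∈ Finset.univ.erase e, CG.g p t A j) * (if e ∈ A then p e else - p e) *
            (M.rank A : ℝ) := by
        unfold CG.D
        refine Finset.sum_congr rfl fun A _ => ?_
        rw [Finset.sum_mul]
    _ = ∑ e : α, ∑ A : Finset α,
          (∏ j ∈ Finset.univ.erase e, CG.g p t A j) * (if e ∈ A then p e else - p e) *
            (M.rank A : ℝ) := Finset.sum_comm
    _ = ∑ e : α, ∑ A : Finset α, subsetWeight (fun e' => t * p e') A *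
          (p e * ((M.rank (insert e A) : ℝ) - (M.rank (A.erase e) : ℝ))) := by
        refine Finset.sum_congr rfl fun e _ => ?_
        rw [hL e, hR e]
    _ = ∑ A : Finset α, ∑ e : α, subsetWeight (fun e' => t * p e') A *
          (p e * ((M.rank (insert e A) : ℝ) - (M.rank (A.erase e) : ℝ))) := Finset.sum_comm
    _ = _ := by
        refine Finset.sum_congr rfl fun A _ => ?_
        rw [Finset.mul_sum]

end Deriv

theorem expRank_ge_correlation_gap {α : Type*} [DecidableEq α] [Fintype α]
    (M : FinMatroid α) (p : α → ℝ) (hp0 : ∀ e, 0 ≤ p e)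
    (hpoly : ∀ U : Finset α, ∑ e ∈ U, p e ≤ (M.rank U : ℝ)) :
    (1 - 1 / Real.exp 1) * (∑ e : α, p e) ≤ expRank M p := by
  classical
  set c : ℝ := ∑ e : α, p e with hc
  have hp1 : ∀ e, p e ≤ 1 := by
    intro e
    have h := hpoly {e}
    rw [Finset.sum_singleton] at h
    have h2 : (M.rank {e} : ℝ) ≤ 1 := by
      have h3 := CG.rank_le_card M {e}
      have h4 := (Nat.cast_le (α := ℝ)).2 h3
      simpa using h4
    linarith
  have hwnn : ∀ t ∈ Set.Icc (0:ℝ) 1, ∀ A : Finset α,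
      0 ≤ subsetWeight (fun e => t * p e) A := by
    intro t ht A
    refine CG.subsetWeight_nonneg _ (fun e => mul_nonneg ht.1 (hp0 e)) (fun e => ?_) A
    calc t * p e ≤ 1 * 1 := mul_le_mul ht.2 (hp1 e) (hp0 e) one_pos.le
      _ = 1 := one_mul 1
  have hDF : ∀ t ∈ Set.Icc (0:ℝ) 1, c - CG.F M p t ≤ CG.D M p t := by
    intro t ht
    rw [CG.D_eq]
    have hs := CG.sum_subsetWeight (fun e => t * p e)
    have hcF : c - CG.F M p t
        = ∑ A : Finset α, subsetWeight (fun e => t * p e) A * (c - (M.rank A : ℝ)) := by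
      unfold CG.F
      simp only [mul_sub]
      rw [Finset.sum_sub_distrib, ← Finset.sum_mul, hs, one_mul]
    rw [hcF]
    refine Finset.sum_le_sum ?_
    intro A _
    exact mul_le_mul_of_nonneg_left (CG.pointwise M p hp0 hpoly A) (hwnn t ht A)
  have hF0 : CG.F M p 0 = 0 := by
    unfold CG.F
    refine Finset.sum_eq_zero ?_
    intro A _
    rcases eq_or_ne A ∅ with rfl | hne
    · simp [CG.rank_empty M]
    · have hz : subsetWeight (fun e => 0 * p e) A = 0 := by
        obtain ⟨x, hx⟩ := Finset.nonempty_iff_ne_empty.2 hne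
        unfold subsetWeight
        rw [Finset.prod_eq_zero hx (by ring), zero_mul]
      rw [hz, zero_mul]
  have hF1 : CG.F M p 1 = expRank M p := by
    unfold CG.F expRank
    simp only [one_mul]
  have hH' : ∀ t : ℝ, HasDerivAt (fun t => Real.exp t * (c - CG.F M p t))
      (Real.exp t * (c - CG.F M p t) + Real.exp t * (- CG.D M p t)) t := by
    intro t
    exact (Real.hasDerivAt_exp t).mul ((CG.hasDerivAt_F M p t).const_sub c)
  have hdiff : Differentiable ℝ (fun t => Real.exp t * (c - CG.F M p t)) :=
    fun x => (hH' x).differentiableAt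
  have hanti : AntitoneOn (fun t => Real.exp t * (c - CG.F M p t)) (Set.Icc 0 1) := by
    refine antitoneOn_of_deriv_nonpos (convex_Icc 0 1) hdiff.continuous.continuousOn
      hdiff.differentiableOn ?_
    intro x hx
    rw [interior_Icc] at hx
    rw [(hH' x).deriv]
    have hx' : x ∈ Set.Icc (0:ℝ) 1 := ⟨hx.1.le, hx.2.le⟩
    have h5 := hDF x hx'
    nlinarith [Real.exp_pos x]
  have h01 := hanti (Set.left_mem_Icc.2 one_pos.le) (Set.right_mem_Icc.2 one_pos.le)
    one_pos.le
  simp only [Real.exp_zero, hF0, hF1, one_mul, sub_zero] at h01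
  have hepos := Real.exp_pos 1
  have h3 : c - expRank M p ≤ c / Real.exp 1 := by
    rw [le_div_iff₀ hepos]
    rw [mul_comm] at h01
    linarith
  have h4 : (1 - 1 / Real.exp 1) * c = c - c / Real.exp 1 := by ring
  linarith
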